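/- Let G = (N, Act, R) be a first-order grammar such that for each nonterminal A and each i ∈ [1, arity(A)] there exists an (A,i)-sink word; let M_0 = 1 + max over all A, i of the length of a shortest (A,i)-sink word, and let Hmax be the maximum depth of a right-hand side of a rule of G. Suppose T →u T' is a shortest path from T to T' in the rule-based LTS L^rul_G and is not sinking, and write it as T →u1 V →u2 V' →u3 T' where V →u2 V' is the last non-sink occurring in the path. Then T' = Gσ for some finite term G with depth(G) ≤ (1 + M_0)·Hmax and some substitution σ whose range consists of the root-successors (depth-1 subterms) of V. -/

import Mathlib

/-- The "signature" of a first-order grammar: a finite set of ranked nonterminals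
(represented as `Fin ntCount`, with arities) and a finite set of actions
(represented as `Fin actCount`). -/
structure GrammarSig where
  ntCount : ℕ
  arity : Fin ntCount → ℕ
  actCount : ℕ

/-- The polynomial functor whose coinductive fixed point is the set of (finite or
infinite) terms over the nonterminals: a node is labelled either by a nonterminal
`A` (with `arity A` ordered children) or by a variable `x_n`, `n : ℕ` (a leaf). -/
def GrammarSig.P (S : GrammarSig) : PFunctor :=
  ⟨Fin S.ntCount ⊕ ℕ, fun l =>
    match l with
    | Sum.inl A => Fin (S.arity A)
    | Sum.inr _ => Empty⟩

/-- Terms over the signature `S`: finite or infinite ordered trees with nodes labelled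
by nonterminals (inner nodes) or variables (leaves). -/
def GTerm (S : GrammarSig) := PFunctor.M S.P

/-- The term consisting of the single variable `x_n`. -/
def GTerm.var (S : GrammarSig) (n : ℕ) : GTerm S :=
  PFunctor.M.mk ⟨Sum.inr n, fun e => e.elim⟩

/-- The term `A(c 0, …, c (m-1))`. -/
def GTerm.app {S : GrammarSig} (A : Fin S.ntCount) (c : Fin (S.arity A) → GTerm S) :
    GTerm S :=
  PFunctor.M.mk ⟨Sum.inl A, c⟩

/-- Applying a substitution `σ` to a term `T`: every occurrence of a variable `x_n`
in `T` is replaced by `σ n` (defined corecursively). -/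
def GTerm.subst {S : GrammarSig} (σ : ℕ → GTerm S) (T : GTerm S) : GTerm S :=
  PFunctor.M.corec
    (fun st : Bool × GTerm S =>
      match PFunctor.M.dest st.2 with
      | ⟨Sum.inl A, c⟩ => ⟨Sum.inl A, fun i => (st.1, c i)⟩
      | ⟨Sum.inr n, _⟩ =>
        if st.1 then
          ⟨(PFunctor.M.dest (σ n)).1, fun i => (false, (PFunctor.M.dest (σ n)).2 i)⟩
        else ⟨Sum.inr n, fun e => e.elim⟩)
    (true, T)

/-- A substitution (as a total map `ℕ → GTerm S`) has finite support. -/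
def FinSupp {S : GrammarSig} (σ : ℕ → GTerm S) : Prop :=
  {n | σ n ≠ GTerm.var S n}.Finite

/-- `childRel S T T'`: `T'` is a root-successor (depth-1 subterm occurrence) of `T`. -/
def childRel (S : GrammarSig) : GTerm S → GTerm S → Prop := fun T T' =>
  ∃ (A : Fin S.ntCount) (c : Fin (S.arity A) → GTerm S), T = GTerm.app A c ∧ ∃ i, T' = c i

/-- `T'` is a subterm of `T`. -/
def SubtermOf (S : GrammarSig) (T' T : GTerm S) : Prop :=
  Relation.ReflTransGen (childRel S) T T'

/-- The variable `x_n` occurs in `T`. -/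
def VarOccurs (S : GrammarSig) (n : ℕ) (T : GTerm S) : Prop :=
  SubtermOf S (GTerm.var S n) T

/-- `OccAtDepth S d T V`: `V` has a subterm-occurrence in `T` at depth `d`. -/
inductive OccAtDepth (S : GrammarSig) : ℕ → GTerm S → GTerm S → Prop
  | refl (T : GTerm S) : OccAtDepth S 0 T T
  | step {d : ℕ} {T T' V : GTerm S} :
      childRel S T T' → OccAtDepth S d T' V → OccAtDepth S (d + 1) T V

/-- A term is regular if it has only finitely many distinct subterms. -/
def RegularT (S : GrammarSig) (T : GTerm S) : Prop := {T' | SubtermOf S T' T}.Finite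

/-- The presentation size of a (regular) term: the number of its distinct subterms. -/
noncomputable def pressize (S : GrammarSig) (T : GTerm S) : ℕ :=
  {T' | SubtermOf S T' T}.ncard

/-- Finite terms over the signature `S`. -/
inductive FTerm (S : GrammarSig) where
  | var : ℕ → FTerm S
  | app : (A : Fin S.ntCount) → (Fin (S.arity A) → FTerm S) → FTerm S

/-- The (finite or infinite) term corresponding to a finite term. -/
def FTerm.toTerm {S : GrammarSig} : FTerm S → GTerm S
  | .var n => GTerm.var S n
  | .app A c => GTerm.app A (fun i => (c i).toTerm)

/-- The variable `x_n` occurs in the finite term `E`. -/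
def FTerm.VOccurs {S : GrammarSig} (n : ℕ) : FTerm S → Prop
  | .var m => m = n
  | .app _ c => ∃ i, (c i).VOccurs n

/-- The depth of a finite term (the largest depth of a subterm occurrence). -/
def FTerm.depth {S : GrammarSig} : FTerm S → ℕ
  | .var _ => 0
  | .app _ c => Finset.univ.sup fun i => (c i).depth + 1

/-- A rule `A(x_0, …, x_{m−1}) →ₐ E` of a first-order grammar: `E` is a finite term
all of whose variables are among `x_0, …, x_{m−1}` where `m = arity A`. -/
structure GRule (S : GrammarSig) where
  nt : Fin S.ntCount
  act : Fin S.actCount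
  rhs : FTerm S
  rhs_wf : ∀ n : ℕ, rhs.VOccurs n → n < S.arity nt

/-- A first-order grammar: a signature together with a finite set (list) of rules. -/
structure FOGrammar where
  sig : GrammarSig
  rules : List (GRule sig)

/-- The term `A(x_0, …, x_{m−1})` (the left-hand side of rules for `A`). -/
def lhsTerm {S : GrammarSig} (A : Fin S.ntCount) : GTerm S :=
  GTerm.app A fun i => GTerm.var S i.val

/-- A labelled transition system with states `S` and actions `A`. -/
structure LTS (S : Type*) (A : Type*) where
  Tr : A → S → S → Prop

namespace LTS

variable {S A : Type*}

/-- An LTS is image-finite if each state has finitely many `a`-successors. -/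
def ImageFinite (L : LTS S A) : Prop := ∀ a s, {t | L.Tr a s t}.Finite

/-- A set `B` of pairs of states covers the pair `p`. -/
def Covers (L : LTS S A) (B : Set (S × S)) (p : S × S) : Prop :=
  (∀ a s', L.Tr a p.1 s' → ∃ t', L.Tr a p.2 t' ∧ (s', t') ∈ B) ∧
  (∀ a t', L.Tr a p.2 t' → ∃ s', L.Tr a p.1 s' ∧ (s', t') ∈ B)

/-- `B'` covers the set `B` (i.e., covers each of its pairs). -/
def CoversSet (L : LTS S A) (B' B : Set (S × S)) : Prop := ∀ p ∈ B, L.Covers B' p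

/-- `B ⊐ B'`: `B'` is a minimal expansion for `B`. -/
def MinExp (L : LTS S A) (B B' : Set (S × S)) : Prop :=
  L.CoversSet B' B ∧ ∀ B'', B'' ⊂ B' → ¬ L.CoversSet B'' B

/-- The stratified equivalences: `∼_0` is everything, `∼_{k+1}` are the pairs covered by `∼_k`. -/
def simN (L : LTS S A) : ℕ → Set (S × S)
  | 0 => Set.univ
  | k + 1 => {p | L.Covers (L.simN k) p}

/-- `eqlevel(s,t) ∈ ℕ ∪ {ω}`: the largest `e` with `s ∼_e t` (`⊤` plays the role of `ω`,
meaning `s ∼_k t` for all `k ∈ ℕ`). -/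
noncomputable def eqlevel (L : LTS S A) (s t : S) : ℕ∞ :=
  sSup {e : ℕ∞ | ∃ k : ℕ, e = (k : ℕ∞) ∧ (s, t) ∈ L.simN k}

/-- `LeastEqLev(B) = min {eqlevel(s,t) | (s,t) ∈ B}`, with `min ∅ = ω = ⊤`. -/
noncomputable def leastEqLev (L : LTS S A) (B : Set (S × S)) : ℕ∞ :=
  sInf {e : ℕ∞ | ∃ p ∈ B, e = L.eqlevel p.1 p.2}

/-- `B` is a bisimulation if it covers itself. -/
def Bisimulation (L : LTS S A) (B : Set (S × S)) : Prop := L.CoversSet B B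

/-- `s ∼ t`: some bisimulation contains `(s,t)`. -/
def Bisim (L : LTS S A) (s t : S) : Prop := ∃ B, L.Bisimulation B ∧ (s, t) ∈ B

end LTS

/-- The rule-based LTS `L^rul_G`: states are the terms, actions are the rules of `G`,
and a rule `r : A(x_0,…,x_{m−1}) →ₐ E` induces `(A(x_0,…,x_{m−1}))σ →r Eσ` for every
substitution `σ`. -/
def LTSrul (G : FOGrammar) : LTS (GTerm G.sig) (GRule G.sig) where
  Tr r T T' := r ∈ G.rules ∧ ∃ σ : ℕ → GTerm G.sig, FinSupp σ ∧
    T = GTerm.subst σ (lhsTerm r.nt) ∧ T' = GTerm.subst σ r.rhs.toTerm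

/-- The action-based LTS `L^act_G`: the transitions of `L^rul_G` relabelled by the
actions of the rules; in addition each variable `x_n` has its own fresh action
(represented by `Sum.inr n`) with the single transition `x_n →_{a_{x_n}} x_n`. -/
def LTSact (G : FOGrammar) : LTS (GTerm G.sig) (Fin G.sig.actCount ⊕ ℕ) where
  Tr a T T' :=
    match a with
    | Sum.inl a => ∃ r : GRule G.sig, r.act = a ∧ (LTSrul G).Tr r T T'
    | Sum.inr n => T = GTerm.var G.sig n ∧ T' = GTerm.var G.sig n

/-- `RPath G T w T'`: the path `T →w T'` in the rule-based LTS `L^rul_G`, `w ∈ R*`. -/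
inductive RPath (G : FOGrammar) : GTerm G.sig → List (GRule G.sig) → GTerm G.sig → Prop
  | nil (T : GTerm G.sig) : RPath G T [] T
  | cons {T T1 T' : GTerm G.sig} {r : GRule G.sig} {w : List (GRule G.sig)} :
      (LTSrul G).Tr r T T1 → RPath G T1 w T' → RPath G T (r :: w) T'

/-- `APath G T w T'`: the path `T →w T'` in the action-based LTS `L^act_G` for a word
`w ∈ Act*` of proper actions (using no special variable transitions). -/
inductive APath (G : FOGrammar) :
    GTerm G.sig → List (Fin G.sig.actCount) → GTerm G.sig → Prop
  | nil (T : GTerm G.sig) : APath G T [] T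
  | cons {T T1 T' : GTerm G.sig} {a : Fin G.sig.actCount} {w : List (Fin G.sig.actCount)} :
      (LTSact G).Tr (Sum.inl a) T T1 → APath G T1 w T' → APath G T (a :: w) T'

/-- `w ∈ R*` is an `(A,i)`-sink word: `A(x_0,…,x_{m−1}) →w x_i` in `L^rul_G`. -/
def SinkWord (G : FOGrammar) (A : Fin G.sig.ntCount) (i : Fin (G.sig.arity A))
    (w : List (GRule G.sig)) : Prop :=
  RPath G (lhsTerm A) w (GTerm.var G.sig i.val)

/-- `M_0 = 1 + max_{A,i} (length of a shortest (A,i)-sink word)`. -/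
noncomputable def M0 (G : FOGrammar) : ℕ :=
  1 + Finset.univ.sup fun A : Fin G.sig.ntCount =>
        Finset.univ.sup fun i : Fin (G.sig.arity A) =>
          sInf {n : ℕ | ∃ w, SinkWord G A i w ∧ w.length = n}

/-- The path `V →w` is root-performable: `A(x_0,…,x_{m−1}) →w` for `A` the root
nonterminal of `V` (so `w` is enabled by any term with root `A`). A root-performable
path of length `M_0` is called a non-sink. -/
def RootPerf (G : FOGrammar) (V : GTerm G.sig) (w : List (GRule G.sig)) : Prop :=
  ∃ (A : Fin G.sig.ntCount) (c : Fin (G.sig.arity A) → GTerm G.sig),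
    V = GTerm.app A c ∧ ∃ H, RPath G (lhsTerm A) w H

/-- The path `T →u` is sinking: it contains no non-sink, i.e. every factorization
`u = u_1 u_2 u_3` with `|u_2| = M_0` sinks to a root-successor within the middle
segment: `u_2 = u'_2 u''_2` with `u'_2 ≠ ε`, `T →u_1 V' →u'_2 V''`, and `V''` a
root-successor of `V'`. -/
def Sinking (G : FOGrammar) (T : GTerm G.sig) (u : List (GRule G.sig)) : Prop :=
  ∀ u1 u2 u3, u = u1 ++ u2 ++ u3 → u2.length = M0 G →
    ∃ (u2a u2b : List (GRule G.sig)) (V' V'' : GTerm G.sig),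
      u2 = u2a ++ u2b ∧ u2a ≠ [] ∧
      RPath G T u1 V' ∧ RPath G V' u2a V'' ∧ childRel G.sig V' V''

/-- `Hmax`: the maximum depth of a right-hand side of a rule of `G`. -/
def Hmax (G : FOGrammar) : ℕ :=
  (G.rules.map fun r => r.rhs.depth).foldr max 0
namespace FOGProof

open PFunctor

variable {S : GrammarSig}

/-- The corecursion step function used in `GTerm.subst`. -/
def sfun (σ : ℕ → GTerm S) : Bool × GTerm S → (S.P).Obj (Bool × GTerm S) :=
  fun st =>
    match PFunctor.M.dest st.2 with
    | ⟨Sum.inl A, c⟩ => ⟨Sum.inl A, fun i => (st.1, c i)⟩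
    | ⟨Sum.inr n, _⟩ =>
      if st.1 then
        ⟨(PFunctor.M.dest (σ n)).1, fun i => (false, (PFunctor.M.dest (σ n)).2 i)⟩
      else ⟨Sum.inr n, fun e => e.elim⟩

lemma subst_eq (σ : ℕ → GTerm S) (T : GTerm S) :
    GTerm.subst σ T = PFunctor.M.corec (sfun σ) (true, T) := rfl

lemma corec_sfun_false (σ : ℕ → GTerm S) (T : GTerm S) :
    PFunctor.M.corec (sfun σ) (false, T) = T := by
  apply PFunctor.M.bisim (fun x y => x = PFunctor.M.corec (sfun σ) (false, y)) _ _ _ rfl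
  intro x y hxy
  subst hxy
  rcases hy : PFunctor.M.dest y with ⟨a, g⟩
  rcases a with A | n
  · refine ⟨Sum.inl A, fun i => PFunctor.M.corec (sfun σ) (false, g i), g, ?_, rfl,
      fun i => rfl⟩
    rw [PFunctor.M.dest_corec]
    simp only [sfun, hy, PFunctor.map_eq]
    rfl
  · refine ⟨Sum.inr n, fun e => e.elim, g, ?_, ?_, fun i => i.elim⟩
    · rw [PFunctor.M.dest_corec]
      simp only [sfun, hy]
      simp only [Bool.false_eq_true, ↓reduceIte]
      erw [PFunctor.map_eq]
      have h3 : (PFunctor.M.corec (sfun σ) ∘ (fun e => Empty.elim e) :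
          S.P.B (Sum.inr n) → S.P.M) = fun e => Empty.elim e := funext fun e => e.elim
      rw [h3]
      rfl
    · have h3 : g = fun e : S.P.B (Sum.inr n) => Empty.elim e := funext fun e => e.elim
      rw [h3]

lemma subst_var (σ : ℕ → GTerm S) (n : ℕ) :
    GTerm.subst σ (GTerm.var S n) = σ n := by
  have h : PFunctor.M.dest (GTerm.subst σ (GTerm.var S n)) = PFunctor.M.dest (σ n) := by
    rw [subst_eq, PFunctor.M.dest_corec]
    have hv : PFunctor.M.dest ((GTerm.var S n) : PFunctor.M S.P)
        = ⟨Sum.inr n, fun e => e.elim⟩ := PFunctor.M.dest_mk _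
    simp only [sfun, hv, PFunctor.map_eq]
    erw [if_pos trivial]
    rcases hd : PFunctor.M.dest (σ n) with ⟨a, g⟩
    simp only [PFunctor.map_eq]
    congr 1
    funext i
    exact corec_sfun_false σ _
  exact (PFunctor.M.mk_dest _).symm.trans ((congrArg PFunctor.M.mk h).trans (PFunctor.M.mk_dest _))

lemma subst_app (σ : ℕ → GTerm S) (A : Fin S.ntCount) (c : Fin (S.arity A) → GTerm S) :
    GTerm.subst σ (GTerm.app A c) = GTerm.app A (fun i => GTerm.subst σ (c i)) := by
  have h : PFunctor.M.dest (GTerm.subst σ (GTerm.app A c))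
      = ⟨Sum.inl A, fun i => GTerm.subst σ (c i)⟩ := by
    rw [subst_eq, PFunctor.M.dest_corec]
    have hv : PFunctor.M.dest ((GTerm.app A c) : PFunctor.M S.P)
        = ⟨Sum.inl A, c⟩ := PFunctor.M.dest_mk _
    simp only [sfun, hv, PFunctor.map_eq]
    rfl
  exact (PFunctor.M.mk_dest _).symm.trans (congrArg PFunctor.M.mk h)

lemma var_ne_app (n : ℕ) (A : Fin S.ntCount) (c : Fin (S.arity A) → GTerm S) :
    GTerm.var S n ≠ GTerm.app A c := by
  intro h
  have h2 := congrArg (fun x => (PFunctor.M.dest (x : PFunctor.M S.P)).1) h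
  simp only [GTerm.var, GTerm.app, PFunctor.M.dest_mk] at h2
  exact absurd h2 Sum.inr_ne_inl

lemma var_inj {n m : ℕ} (h : GTerm.var S n = GTerm.var S m) : n = m := by
  have h2 := congrArg (fun x => (PFunctor.M.dest (x : PFunctor.M S.P)).1) h
  simp only [GTerm.var, PFunctor.M.dest_mk] at h2
  exact Sum.inr.inj h2

lemma app_inj_nt {A B : Fin S.ntCount} {c : Fin (S.arity A) → GTerm S}
    {d : Fin (S.arity B) → GTerm S} (h : GTerm.app A c = GTerm.app B d) : A = B := by
  have h2 := congrArg (fun x => (PFunctor.M.dest (x : PFunctor.M S.P)).1) h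
  simp only [GTerm.app, PFunctor.M.dest_mk] at h2
  exact Sum.inl.inj h2

lemma app_inj_children {A : Fin S.ntCount} {c d : Fin (S.arity A) → GTerm S}
    (h : GTerm.app A c = GTerm.app A d) : c = d := by
  have h2 := congrArg (fun x => PFunctor.M.dest (x : PFunctor.M S.P)) h
  simp only [GTerm.app, PFunctor.M.dest_mk] at h2
  injection h2 with h3 h4

end FOGProof
namespace FOGProof

variable {S : GrammarSig}

/-- Substitution of finite terms for variables in a finite term. -/
def ftsub : FTerm S → (ℕ → FTerm S) → FTerm S
  | .var n, τ => τ n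
  | .app A c, τ => .app A (fun i => ftsub (c i) τ)

/-- Extend a `Fin m`-indexed family to a full substitution (identity elsewhere). -/
def ext {m : ℕ} (t : Fin m → FTerm S) : ℕ → FTerm S :=
  fun n => if h : n < m then t ⟨n, h⟩ else .var n

lemma ext_lt {m : ℕ} (t : Fin m → FTerm S) {n : ℕ} (h : n < m) :
    ext t n = t ⟨n, h⟩ := dif_pos h

lemma ext_val {m : ℕ} (t : Fin m → FTerm S) (i : Fin m) : ext t i.val = t i := by
  rw [ext_lt t i.isLt]

lemma ftsub_agree {E : FTerm S} {τ1 τ2 : ℕ → FTerm S}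
    (h : ∀ n, E.VOccurs n → τ1 n = τ2 n) : ftsub E τ1 = ftsub E τ2 := by
  induction E with
  | var n => exact h n rfl
  | app A c ih =>
    simp only [ftsub]
    congr 1
    funext i
    exact ih i (fun n hn => h n ⟨i, hn⟩)

lemma ftsub_comp (E : FTerm S) (α β : ℕ → FTerm S) :
    ftsub (ftsub E α) β = ftsub E (fun n => ftsub (α n) β) := by
  induction E with
  | var n => rfl
  | app A c ih =>
    simp only [ftsub]
    congr 1
    funext i
    exact ih i

lemma voccurs_ftsub {n : ℕ} {E : FTerm S} {τ : ℕ → FTerm S}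
    (h : (ftsub E τ).VOccurs n) : ∃ m, E.VOccurs m ∧ (τ m).VOccurs n := by
  induction E with
  | var m => exact ⟨m, rfl, h⟩
  | app A c ih =>
    obtain ⟨i, hi⟩ := h
    obtain ⟨m, hm1, hm2⟩ := ih i hi
    exact ⟨m, ⟨i, hm1⟩, hm2⟩

lemma depth_ftsub {E : FTerm S} {τ : ℕ → FTerm S} {D : ℕ}
    (h : ∀ n, E.VOccurs n → (τ n).depth ≤ D) : (ftsub E τ).depth ≤ E.depth + D := by
  induction E with
  | var n => simpa [FTerm.depth, ftsub] using h n rfl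
  | app A c ih =>
    simp only [ftsub, FTerm.depth]
    apply Finset.sup_le
    intro i _
    have h1 : (ftsub (c i) τ).depth ≤ (c i).depth + D := ih i (fun n hn => h n ⟨i, hn⟩)
    have h2 : (c i).depth + 1 ≤ Finset.univ.sup fun j => (c j).depth + 1 :=
      Finset.le_sup (f := fun j => (c j).depth + 1) (Finset.mem_univ i)
    omega

/-- Substituting with terms then applying a `GTerm` substitution. -/
lemma subst_ftsub (σ : ℕ → GTerm S) (E : FTerm S) (τ : ℕ → FTerm S) :
    GTerm.subst σ ((ftsub E τ).toTerm)
      = GTerm.subst (fun n => GTerm.subst σ ((τ n).toTerm)) E.toTerm := by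
  induction E with
  | var n => simp only [ftsub, FTerm.toTerm, subst_var]
  | app A c ih =>
    simp only [ftsub, FTerm.toTerm, subst_app]
    congr 1
    funext i
    exact ih i

lemma subst_toTerm_agree {E : FTerm S} {σ1 σ2 : ℕ → GTerm S}
    (h : ∀ n, E.VOccurs n → σ1 n = σ2 n) :
    GTerm.subst σ1 E.toTerm = GTerm.subst σ2 E.toTerm := by
  induction E with
  | var n => simp only [FTerm.toTerm, subst_var]; exact h n rfl
  | app A c ih =>
    simp only [FTerm.toTerm, subst_app]
    congr 1
    funext i
    exact ih i (fun n hn => h n ⟨i, hn⟩)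

lemma subst_var_id (E : FTerm S) : GTerm.subst (GTerm.var S) E.toTerm = E.toTerm := by
  induction E with
  | var n => simp only [FTerm.toTerm, subst_var]
  | app A c ih =>
    simp only [FTerm.toTerm, subst_app]
    congr 1
    funext i
    exact ih i

/-- The left-hand-side term as a finite term. -/
def lhsF (A : Fin S.ntCount) : FTerm S := .app A (fun i => .var i.val)

lemma lhsF_toTerm (A : Fin S.ntCount) : (lhsF A).toTerm = lhsTerm A := rfl

lemma ftsub_lhsF {A : Fin S.ntCount} (t : Fin (S.arity A) → FTerm S) :
    ftsub (lhsF A) (ext t) = FTerm.app A t := by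
  simp only [lhsF, ftsub]
  congr 1
  funext i
  exact ext_val t i

lemma voccurs_lhsF {A : Fin S.ntCount} {n : ℕ} (h : (lhsF A : FTerm S).VOccurs n) :
    n < S.arity A := by
  obtain ⟨i, hi⟩ := h
  have : i.val = n := hi
  omega

lemma subst_lhsTerm (σ : ℕ → GTerm S) (A : Fin S.ntCount) :
    GTerm.subst σ (lhsTerm A) = GTerm.app A (fun i => σ i.val) := by
  simp only [lhsTerm, subst_app, subst_var]

lemma lhsF_depth (A : Fin S.ntCount) : (lhsF A : FTerm S).depth ≤ 1 := by
  simp only [lhsF, FTerm.depth]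
  apply Finset.sup_le
  intro i _
  simp [FTerm.depth]

end FOGProof
namespace FOGProof

variable {G : FOGrammar}

/-- Head rewriting on finite terms. -/
inductive HPath (G : FOGrammar) :
    FTerm G.sig → List (GRule G.sig) → FTerm G.sig → Prop
  | nil (K : FTerm G.sig) : HPath G K [] K
  | cons {r : GRule G.sig} {t : Fin (G.sig.arity r.nt) → FTerm G.sig}
      {w : List (GRule G.sig)} {K' : FTerm G.sig} :
      r ∈ G.rules → HPath G (ftsub r.rhs (ext t)) w K' →
      HPath G (FTerm.app r.nt t) (r :: w) K'

lemma hpath_nil_inv {K K' : FTerm G.sig} (h : HPath G K [] K') : K' = K := by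
  cases h; rfl

lemma hpath_var_inv {n : ℕ} {w : List (GRule G.sig)} {K' : FTerm G.sig}
    (h : HPath G (FTerm.var n) w K') : w = [] ∧ K' = FTerm.var n := by
  cases h with
  | nil => exact ⟨rfl, rfl⟩

lemma hpath_append {K K1 K2 : FTerm G.sig} {w1 w2 : List (GRule G.sig)}
    (h1 : HPath G K w1 K1) (h2 : HPath G K1 w2 K2) : HPath G K (w1 ++ w2) K2 := by
  induction h1 with
  | nil => exact h2
  | cons hr hp ih => exact HPath.cons hr (ih h2)

lemma hpath_split {K K2 : FTerm G.sig} {w1 w2 : List (GRule G.sig)}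
    (h : HPath G K (w1 ++ w2) K2) : ∃ K1, HPath G K w1 K1 ∧ HPath G K1 w2 K2 := by
  induction w1 generalizing K with
  | nil => exact ⟨K, HPath.nil K, h⟩
  | cons r w ih =>
    cases h with
    | cons hr hp =>
      obtain ⟨K1, ha, hb⟩ := ih hp
      exact ⟨K1, HPath.cons hr ha, hb⟩

lemma hpath_cons_inv {K K' : FTerm G.sig} {r : GRule G.sig} {w : List (GRule G.sig)}
    (h : HPath G K (r :: w) K') :
    ∃ t, K = FTerm.app r.nt t ∧ r ∈ G.rules ∧ HPath G (ftsub r.rhs (ext t)) w K' := by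
  cases h with
  | cons hr hp => exact ⟨_, rfl, hr, hp⟩

lemma hpath_det {K K1 K2 : FTerm G.sig} {w : List (GRule G.sig)}
    (h1 : HPath G K w K1) (h2 : HPath G K w K2) : K1 = K2 := by
  induction w generalizing K with
  | nil => rw [hpath_nil_inv h1, hpath_nil_inv h2]
  | cons r w ih =>
    obtain ⟨t, hK, hr, hp1⟩ := hpath_cons_inv h1
    obtain ⟨t2, hK2, hr2, hp2⟩ := hpath_cons_inv h2
    rw [hK] at hK2
    injection hK2 with hB hts
    have ht : t = t2 := by
      first
      | exact eq_of_heq hts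
      | exact hts
    subst ht
    exact ih hp1 hp2

lemma hpath_voccurs {K K' : FTerm G.sig} {w : List (GRule G.sig)} {n : ℕ}
    (h : HPath G K w K') (hocc : K'.VOccurs n) : K.VOccurs n := by
  induction h with
  | nil => exact hocc
  | @cons r t w K' hr hp ih =>
    obtain ⟨m, hm1, hm2⟩ := voccurs_ftsub (ih hocc)
    have hlt : m < G.sig.arity r.nt := r.rhs_wf m hm1
    rw [ext_lt t hlt] at hm2
    exact ⟨⟨m, hlt⟩, hm2⟩

lemma rule_depth_le {r : GRule G.sig} (hr : r ∈ G.rules) : r.rhs.depth ≤ Hmax G := by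
  unfold Hmax
  have hm : r.rhs.depth ∈ G.rules.map fun r => r.rhs.depth := List.mem_map_of_mem hr
  generalize (G.rules.map fun r => r.rhs.depth) = l at hm
  induction l with
  | nil => cases hm
  | cons x xs ih =>
    simp only [List.foldr_cons]
    rcases List.mem_cons.mp hm with h | h
    · exact h ▸ le_max_left _ _
    · exact le_trans (ih h) (le_max_right _ _)

lemma depth_step {r : GRule G.sig} (hr : r ∈ G.rules)
    (t : Fin (G.sig.arity r.nt) → FTerm G.sig) :
    (ftsub r.rhs (ext t)).depth ≤ Hmax G + ((FTerm.app r.nt t).depth - 1) := by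
  have h1 : (ftsub r.rhs (ext t)).depth ≤ r.rhs.depth + ((FTerm.app r.nt t).depth - 1) := by
    apply depth_ftsub
    intro n hn
    have hlt := r.rhs_wf n hn
    rw [ext_lt t hlt]
    have h2 : (t ⟨n, hlt⟩).depth + 1 ≤ (FTerm.app r.nt t).depth :=
      Finset.le_sup (f := fun j => (t j).depth + 1) (Finset.mem_univ _)
    omega
  have := rule_depth_le hr
  omega

lemma hpath_depth {K K' : FTerm G.sig} {w : List (GRule G.sig)}
    (h : HPath G K w K') (hw : w ≠ []) :
    K'.depth ≤ (K.depth - 1) + w.length * Hmax G := by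
  induction h with
  | nil => exact absurd rfl hw
  | @cons r t w K' hr hp ih =>
    rcases eq_or_ne w [] with rfl | hne
    · have h1 := hpath_nil_inv hp
      subst h1
      have h2 := depth_step hr t
      simp only [List.length_cons, List.length_nil]
      omega
    · have h1 := ih hne
      have h2 := depth_step hr t
      have h3 : (w.length + 1) * Hmax G = w.length * Hmax G + Hmax G := by ring
      simp only [List.length_cons]
      omega

/-- Head rewriting is compatible with substitution of finite terms. -/
lemma hpath_ftsub {K K' : FTerm G.sig} {w : List (GRule G.sig)}
    (h : HPath G K w K') (τ : ℕ → FTerm G.sig) :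
    HPath G (ftsub K τ) w (ftsub K' τ) := by
  induction h with
  | nil => exact HPath.nil _
  | @cons r t w K' hr hp ih =>
    have hG : ftsub (ftsub r.rhs (ext t)) τ
        = ftsub r.rhs (ext (fun i => ftsub (t i) τ)) := by
      rw [ftsub_comp]
      apply ftsub_agree
      intro n hn
      have hlt := r.rhs_wf n hn
      rw [ext_lt t hlt, ext_lt _ hlt]
    rw [hG] at ih
    exact HPath.cons hr ih

/-- Lifting a head path along a decomposition `X = ftsub P τ`. -/
lemma hpath_ftsub_lift {w : List (GRule G.sig)} {X K' : FTerm G.sig}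
    (h : HPath G X w K') : ∀ (P : FTerm G.sig) (τ : ℕ → FTerm G.sig), X = ftsub P τ →
    (∃ J, HPath G P w J ∧ K' = ftsub J τ) ∨
    (∃ w1 w2 j, w = w1 ++ w2 ∧ HPath G P w1 (FTerm.var j) ∧ HPath G (τ j) w2 K') := by
  induction h with
  | nil =>
    intro P τ hX
    exact Or.inl ⟨P, HPath.nil P, hX⟩
  | @cons r t w K' hr hp ih =>
    intro P τ hX
    cases P with
    | var j =>
      refine Or.inr ⟨[], r :: w, j, rfl, HPath.nil _, ?_⟩
      have hX' : τ j = FTerm.app r.nt t := hX.symm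
      rw [hX']
      exact HPath.cons hr hp
    | app B s =>
      simp only [ftsub] at hX
      injection hX with hB hst
      subst hB
      have hst' : t = fun i => ftsub (s i) τ := by
        first
        | exact eq_of_heq hst
        | exact hst
      have hG : ftsub r.rhs (ext t) = ftsub (ftsub r.rhs (ext s)) τ := by
        rw [hst', ftsub_comp]
        apply ftsub_agree
        intro n hn
        have hlt := r.rhs_wf n hn
        rw [ext_lt s hlt, ext_lt _ hlt]
      rcases ih (ftsub r.rhs (ext s)) τ hG with ⟨J, hJ1, hJ2⟩ | ⟨w1, w2, j, hw, hp1, hp2⟩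
      · exact Or.inl ⟨J, HPath.cons hr hJ1, hJ2⟩
      · exact Or.inr ⟨r :: w1, w2, j, by rw [hw]; rfl, HPath.cons hr hp1, hp2⟩

end FOGProof
namespace FOGProof

variable {G : FOGrammar}

lemma rpath_nil_inv {T T' : GTerm G.sig} (h : RPath G T [] T') : T' = T := by
  cases h
  rfl

lemma rpath_append {T1 T2 T3 : GTerm G.sig} {w1 w2 : List (GRule G.sig)}
    (h1 : RPath G T1 w1 T2) (h2 : RPath G T2 w2 T3) : RPath G T1 (w1 ++ w2) T3 := by
  induction h1 with
  | nil => exact h2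
  | cons htr hp ih => exact RPath.cons htr (ih h2)

lemma tr_from_var {r : GRule G.sig} {n : ℕ} {X : GTerm G.sig}
    (h : (LTSrul G).Tr r (GTerm.var G.sig n) X) : False := by
  obtain ⟨-, τ, -, hT, -⟩ := h
  rw [subst_lhsTerm] at hT
  exact var_ne_app _ _ _ hT

lemma rpath_from_var {n : ℕ} {w : List (GRule G.sig)} {X : GTerm G.sig}
    (h : RPath G (GTerm.var G.sig n) w X) : w = [] ∧ X = GTerm.var G.sig n := by
  cases h with
  | nil => exact ⟨rfl, rfl⟩
  | cons htr hp => exact absurd htr tr_from_var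

/-- Construction of a transition from a head rewriting step. -/
lemma tr_mk {r : GRule G.sig} (hr : r ∈ G.rules) {σ : ℕ → GTerm G.sig} (hσ : FinSupp σ)
    (t : Fin (G.sig.arity r.nt) → FTerm G.sig) :
    (LTSrul G).Tr r (GTerm.subst σ (FTerm.app r.nt t).toTerm)
      (GTerm.subst σ ((ftsub r.rhs (ext t)).toTerm)) := by
  refine ⟨hr, fun n => GTerm.subst σ ((ext t n).toTerm), ?_, ?_, ?_⟩
  · apply Set.Finite.subset ((Set.finite_Iio (G.sig.arity r.nt)).union hσ)
    intro n hn
    by_cases h : n < G.sig.arity r.nt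
    · exact Or.inl h
    · right
      simp only [Set.mem_setOf_eq] at hn ⊢
      intro hc
      apply hn
      rw [ext, dif_neg h]
      simp only [FTerm.toTerm, subst_var]
      exact hc
  · rw [subst_lhsTerm]
    simp only [FTerm.toTerm, subst_app]
    congr 1
    funext i
    rw [ext_val]
  · rw [subst_ftsub]

/-- A head path induces a path on instantiated terms. -/
lemma hpath_rpath {K K' : FTerm G.sig} {w : List (GRule G.sig)}
    (h : HPath G K w K') {σ : ℕ → GTerm G.sig} (hσ : FinSupp σ) :
    RPath G (GTerm.subst σ K.toTerm) w (GTerm.subst σ K'.toTerm) := by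
  induction h with
  | nil => exact RPath.nil _
  | cons hr hp ih => exact RPath.cons (tr_mk hr hσ _) ih

/-- Inversion of a transition at a term with a known finite head. -/
lemma tr_subst_app {r : GRule G.sig} {σ : ℕ → GTerm G.sig} {B : Fin G.sig.ntCount}
    {t : Fin (G.sig.arity B) → FTerm G.sig} {U : GTerm G.sig}
    (h : (LTSrul G).Tr r (GTerm.subst σ (FTerm.app B t).toTerm) U) :
    r ∈ G.rules ∧ r.nt = B ∧ U = GTerm.subst σ ((ftsub r.rhs (ext t)).toTerm) := by
  obtain ⟨hr, τ, hτ, hT, hU⟩ := h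
  rw [subst_lhsTerm] at hT
  simp only [FTerm.toTerm, subst_app] at hT
  have hnt : B = r.nt := app_inj_nt hT
  subst hnt
  have hch : (fun i : Fin (G.sig.arity r.nt) => GTerm.subst σ (t i).toTerm)
      = fun i => τ i.val := app_inj_children hT
  refine ⟨hr, rfl, ?_⟩
  rw [hU, subst_ftsub]
  apply subst_toTerm_agree
  intro n hn
  have hlt := r.rhs_wf n hn
  have := congrFun hch ⟨n, hlt⟩
  simp only at this
  rw [ext_lt t hlt, ← this]

/-- Lifting an `RPath` from an instantiated finite head: either the head survives the
whole path, or it collapses to a variable somewhere along the way. -/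
lemma rpath_lift {σ : ℕ → GTerm G.sig} {w : List (GRule G.sig)} {Tt U : GTerm G.sig}
    (h : RPath G Tt w U) : ∀ K : FTerm G.sig, Tt = GTerm.subst σ K.toTerm →
    ∃ w1 w2 K1, w = w1 ++ w2 ∧ HPath G K w1 K1 ∧
      RPath G (GTerm.subst σ K1.toTerm) w2 U ∧
      (w2 = [] ∨ ∃ n, K1 = FTerm.var n) := by
  induction h with
  | nil =>
    intro K hK
    exact ⟨[], [], K, rfl, HPath.nil K, by rw [← hK]; exact RPath.nil _, Or.inl rfl⟩
  | @cons T T1 T' r w htr hp ih =>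
    intro K hK
    cases K with
    | var n =>
      refine ⟨[], r :: w, FTerm.var n, rfl, HPath.nil _, ?_, Or.inr ⟨n, rfl⟩⟩
      rw [← hK]
      exact RPath.cons htr hp
    | app B t =>
      subst hK
      obtain ⟨hr, hnt, hU⟩ := tr_subst_app htr
      subst hnt
      obtain ⟨w1, w2, K1, hw, hh, hrp, hd⟩ := ih (ftsub r.rhs (ext t)) hU
      exact ⟨r :: w1, w2, K1, by rw [hw]; rfl, HPath.cons hr hh, hrp, hd⟩

end FOGProof
namespace FOGProof

variable {G : FOGrammar}

lemma M0_pos : 1 ≤ M0 G := Nat.le_add_right 1 _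

/-- Existence of a short sink word (as a pure head path). -/
lemma short_sink (G : FOGrammar)
    (hsink : ∀ (A : Fin G.sig.ntCount) (i : Fin (G.sig.arity A)), ∃ w, SinkWord G A i w)
    (A : Fin G.sig.ntCount) {n : ℕ} (hn : n < G.sig.arity A) :
    ∃ sw : List (GRule G.sig), HPath G (lhsF A) sw (FTerm.var n) ∧ sw.length + 1 ≤ M0 G := by
  set St := {k : ℕ | ∃ w, SinkWord G A ⟨n, hn⟩ w ∧ w.length = k} with hSt
  have hne : St.Nonempty := by
    obtain ⟨w, hw⟩ := hsink A ⟨n, hn⟩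
    exact ⟨w.length, w, hw, rfl⟩
  obtain ⟨w, hw, hwl⟩ := Nat.sInf_mem hne
  -- bound on the length
  have hbound : sInf St + 1 ≤ M0 G := by
    have h1 : sInf St ≤ Finset.univ.sup
        fun i : Fin (G.sig.arity A) =>
          sInf {k : ℕ | ∃ w, SinkWord G A i w ∧ w.length = k} :=
      Finset.le_sup (f := fun i : Fin (G.sig.arity A) =>
        sInf {k : ℕ | ∃ w, SinkWord G A i w ∧ w.length = k}) (Finset.mem_univ (⟨n, hn⟩ : Fin (G.sig.arity A)))
    have h2 : (Finset.univ.sup fun i : Fin (G.sig.arity A) =>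
          sInf {k : ℕ | ∃ w, SinkWord G A i w ∧ w.length = k})
        ≤ Finset.univ.sup fun B : Fin G.sig.ntCount =>
            Finset.univ.sup fun i : Fin (G.sig.arity B) =>
              sInf {k : ℕ | ∃ w, SinkWord G B i w ∧ w.length = k} :=
      Finset.le_sup (f := fun B : Fin G.sig.ntCount =>
        Finset.univ.sup fun i : Fin (G.sig.arity B) =>
          sInf {k : ℕ | ∃ w, SinkWord G B i w ∧ w.length = k}) (Finset.mem_univ A)
    unfold M0
    omega
  -- lift the sink word to a head path
  have hlhs : (lhsTerm A : GTerm G.sig) = GTerm.subst (GTerm.var G.sig) (lhsF A).toTerm := by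
    rw [subst_var_id, lhsF_toTerm]
  obtain ⟨w1, w2, K1, hwsplit, hh, hrp, hdisj⟩ := rpath_lift hw (lhsF A) hlhs
  have hvm : ∀ m : ℕ, GTerm.subst (GTerm.var G.sig) (FTerm.var m : FTerm G.sig).toTerm
      = GTerm.var G.sig m := by
    intro m
    simp only [FTerm.toTerm]
    rw [subst_var]
  have hw2nil : w2 = [] := by
    rcases hdisj with h | ⟨m, hm⟩
    · exact h
    · subst hm
      rw [hvm] at hrp
      exact (rpath_from_var hrp).1
  subst hw2nil
  have h3 := rpath_nil_inv hrp
  have hK1 : K1 = FTerm.var n := by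
    cases K1 with
    | var m =>
      rw [hvm] at h3
      have h4 : n = m := var_inj h3
      rw [h4]
    | app B d =>
      exfalso
      rw [subst_var_id] at h3
      simp only [FTerm.toTerm] at h3
      exact var_ne_app _ _ _ h3
  subst hK1
  refine ⟨w1, hh, ?_⟩
  have : w1.length ≤ w.length := by
    rw [hwsplit]
    simp
  omega

/-- The core combinatorial bound: along a head path all of whose `M0`-windows fail
to be head-performable from the root, the depth stays bounded. -/
lemma core (G : FOGrammar) :
    ∀ (L : ℕ) (w : List (GRule G.sig)), w.length ≤ L →
    ∀ K K' : FTerm G.sig, HPath G K w K' → K.depth ≤ Hmax G →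
    (∀ (a b c : List (GRule G.sig)) (B : Fin G.sig.ntCount)
        (t : Fin (G.sig.arity B) → FTerm G.sig),
      w = a ++ b ++ c → b.length = M0 G → HPath G K a (FTerm.app B t) →
      ∀ J, ¬ HPath G (lhsF B) b J) →
    K'.depth ≤ M0 G * Hmax G := by
  intro L
  induction L with
  | zero =>
    intro w hwl K K' hp hd _hwin
    have : w = [] := List.eq_nil_of_length_eq_zero (Nat.le_zero.mp hwl)
    subst this
    rw [hpath_nil_inv hp]
    calc K.depth ≤ Hmax G := hd
      _ ≤ M0 G * Hmax G := Nat.le_mul_of_pos_left _ M0_pos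
  | succ L ih =>
    intro w hwl K K' hp hd hwin
    by_cases hshort : w.length < M0 G
    · rcases eq_or_ne w [] with rfl | hne
      · rw [hpath_nil_inv hp]
        calc K.depth ≤ Hmax G := hd
          _ ≤ M0 G * Hmax G := Nat.le_mul_of_pos_left _ M0_pos
      · have h1 := hpath_depth hp hne
        have h2 : w.length * Hmax G ≤ (M0 G - 1) * Hmax G :=
          Nat.mul_le_mul_right _ (by omega)
        have h3 : (M0 G - 1) * Hmax G + Hmax G = M0 G * Hmax G := by
          have h4 : M0 G - 1 + 1 = M0 G := by have := @M0_pos G; omega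
          calc (M0 G - 1) * Hmax G + Hmax G = (M0 G - 1 + 1) * Hmax G := by ring
            _ = M0 G * Hmax G := by rw [h4]
        omega
    · -- w has length ≥ M0 : decompose the first window
      push_neg at hshort
      obtain ⟨b, c, hwbc, hbl⟩ : ∃ b c, w = b ++ c ∧ b.length = M0 G :=
        ⟨w.take (M0 G), w.drop (M0 G), (List.take_append_drop _ w).symm, by
          rw [List.length_take]; omega⟩
      have hbne : b ≠ [] := by
        intro h
        rw [h] at hbl
        simp only [List.length_nil] at hbl
        have := @M0_pos G
        omega
      rw [hwbc] at hp
      obtain ⟨Kb, hpb, hpc⟩ := hpath_split hp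
      obtain ⟨r0, b', rfl⟩ : ∃ r0 b', b = r0 :: b' := by
        cases b with
        | nil => exact absurd rfl hbne
        | cons x xs => exact ⟨x, xs, rfl⟩
      obtain ⟨t, hKapp, hr0, _⟩ := hpath_cons_inv hpb
      subst hKapp
      -- apply the lifting dichotomy over the window b
      have hKded : (FTerm.app r0.nt t : FTerm G.sig) = ftsub (lhsF r0.nt) (ext t) :=
        (ftsub_lhsF t).symm
      rcases hpath_ftsub_lift hpb (lhsF r0.nt) (ext t) hKded with
        ⟨J, hJ1, _⟩ | ⟨w1, w2, j, hw12, hp1, hp2⟩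
      · exact absurd hJ1 (hwin [] (r0 :: b') c r0.nt t (by rw [hwbc]; rfl) hbl
          (HPath.nil _) J)
      · -- the head sinks to the child t j within the window
        have hjlt : j < G.sig.arity r0.nt := by
          have hocc : (FTerm.var j : FTerm G.sig).VOccurs j := rfl
          exact voccurs_lhsF (hpath_voccurs hp1 hocc)
        have hextj : ext t j = t ⟨j, hjlt⟩ := ext_lt t hjlt
        rw [hextj] at hp2
        have hw1ne : w1 ≠ [] := by
          intro h
          subst h
          have := hpath_nil_inv hp1
          exact absurd this.symm (by intro hfalse; cases hfalse)
        -- depth of the new head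
        have hdj : (t ⟨j, hjlt⟩).depth ≤ Hmax G := by
          have h5 : (t ⟨j, hjlt⟩).depth + 1 ≤ (FTerm.app r0.nt t).depth :=
            Finset.le_sup (f := fun i => (t i).depth + 1) (Finset.mem_univ _)
          omega
        -- head path from K to t j
        have hpKtj : HPath G (FTerm.app r0.nt t) w1 (t ⟨j, hjlt⟩) := by
          have h6 := hpath_ftsub hp1 (ext t)
          rw [ftsub_lhsF] at h6
          have h7 : ftsub (FTerm.var j) (ext t) = t ⟨j, hjlt⟩ := hextj
          rw [h7] at h6
          exact h6
        -- the remaining path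
        have hrest : HPath G (t ⟨j, hjlt⟩) (w2 ++ c) K' := by
          have h8 : HPath G Kb c K' := hpc
          have h9 : HPath G (t ⟨j, hjlt⟩) w2 Kb := hp2
          exact hpath_append h9 h8
        apply ih (w2 ++ c) ?_ (t ⟨j, hjlt⟩) K' hrest hdj ?_
        · -- length bound
          have hlen : b'.length + 1 = w1.length + w2.length := by
            have := congrArg List.length hw12
            simpa using this
          have hlenw : ((r0 :: b') ++ c).length ≤ L + 1 := by rw [← hwbc]; exact hwl
          have hw1pos : 1 ≤ w1.length := by
            cases w1 with
            | nil => exact absurd rfl hw1ne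
            | cons x xs => simp
          simp only [List.length_append, List.length_cons] at hlenw ⊢
          have hb'len : b'.length + 1 = M0 G := by simpa using hbl
          omega
        · -- shifted window property
          intro a2 b2 c2 B2 t2 hsplit2 hb2l hpa2 J2 hJ2
          have hpw1a2 : HPath G (FTerm.app r0.nt t) (w1 ++ a2) (FTerm.app B2 t2) :=
            hpath_append hpKtj hpa2
          refine hwin (w1 ++ a2) b2 c2 B2 t2 ?_ hb2l hpw1a2 J2 hJ2
          rw [hwbc, hw12, List.append_assoc w1 w2 c, hsplit2]
          simp [List.append_assoc]

end FOGProof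
namespace FOGProof

lemma finsupp_var {S : GrammarSig} : FinSupp (GTerm.var S) :=
  Set.Finite.subset Set.finite_empty (fun _ hn => absurd rfl hn)

end FOGProof

open FOGProof in
/-- assume every `(A,i)` has a sink word. Suppose `T →u T'` is a shortest
path from `T` to `T'` in `L^rul_G` and is not sinking, written `T →u1 V →u2 V' →u3 T'`
where `V →u2 V'` is the last non-sink occurring in the path. Then `T' = Gσ` for a
finite term `G` with `depth(G) ≤ (1 + M_0)·Hmax` and a substitution `σ` whose range
consists of root-successors of `V`. -/
theorem last_nonsink_gives_bounded_head (G : FOGrammar)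
    (hsink : ∀ (A : Fin G.sig.ntCount) (i : Fin (G.sig.arity A)),
      ∃ w, SinkWord G A i w)
    (T V V' T' : GTerm G.sig) (u u1 u2 u3 : List (GRule G.sig))
    (hu : u = u1 ++ u2 ++ u3)
    (hpath : RPath G T u T')
    (hshortest : ∀ v : List (GRule G.sig), RPath G T v T' → u.length ≤ v.length)
    (h1 : RPath G T u1 V) (h2 : RPath G V u2 V') (h3 : RPath G V' u3 T')
    (hlen2 : u2.length = M0 G) (hperf : RootPerf G V u2)
    (hlast : ∀ (v1 v2 v3 : List (GRule G.sig)) (W : GTerm G.sig),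
      u = v1 ++ v2 ++ v3 → v2.length = M0 G → u1.length < v1.length →
      RPath G T v1 W → ¬ RootPerf G W v2) :
    ∃ (g : FTerm G.sig) (σ : ℕ → GTerm G.sig), FinSupp σ ∧
      g.depth ≤ (1 + M0 G) * Hmax G ∧
      T' = GTerm.subst σ g.toTerm ∧
      ∀ n : ℕ, σ n ≠ GTerm.var G.sig n → childRel G.sig V (σ n) := by
  classical
  obtain ⟨A, c, hV, Hfull, hHfull⟩ := hperf
  set σ0 : ℕ → GTerm G.sig :=
    fun n => if h : n < G.sig.arity A then c ⟨n, h⟩ else GTerm.var G.sig n with hσ0def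
  have hσ0fin : FinSupp σ0 := by
    apply Set.Finite.subset (Set.finite_Iio (G.sig.arity A))
    intro n hn
    by_cases h : n < G.sig.arity A
    · exact h
    · exfalso
      apply hn
      simp only [hσ0def]
      rw [dif_neg h]
  have hσ0lt : ∀ (n : ℕ) (h : n < G.sig.arity A), σ0 n = c ⟨n, h⟩ := by
    intro n h
    simp only [hσ0def]
    rw [dif_pos h]
  have hVK0 : V = GTerm.subst σ0 (lhsF A).toTerm := by
    rw [lhsF_toTerm, subst_lhsTerm, hV]
    congr 1
    funext i
    rw [hσ0lt i.val i.isLt]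
  -- head path along u2 from the root-performability witness
  have hlhs2 : (lhsTerm A : GTerm G.sig)
      = GTerm.subst (GTerm.var G.sig) (lhsF A).toTerm := by
    rw [subst_var_id, lhsF_toTerm]
  obtain ⟨y1, y2, KJ, hy, hhy, hry, hdy⟩ := rpath_lift hHfull (lhsF A) hlhs2
  have hy2 : y2 = [] := by
    rcases hdy with h | ⟨m, hm⟩
    · exact h
    · subst hm
      have hvm : GTerm.subst (GTerm.var G.sig) (FTerm.var m : FTerm G.sig).toTerm
          = GTerm.var G.sig m := by
        simp only [FTerm.toTerm]
        rw [subst_var]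
      rw [hvm] at hry
      exact (rpath_from_var hry).1
  subst hy2
  rw [List.append_nil] at hy
  subst hy
  -- hhy : HPath G (lhsF A) u2 KJ
  -- lift the whole path from V
  have hpath23 : RPath G V (u2 ++ u3) T' := rpath_append h2 h3
  obtain ⟨w1, w2, K1, hw, hh, hrp, hdisj⟩ := rpath_lift hpath23 (lhsF A) hVK0
  -- unified collapse contradiction
  have hvar : ∀ n : ℕ, K1 = FTerm.var n → False := by
    intro n hK1n
    subst hK1n
    have hnlt : n < G.sig.arity A := voccurs_lhsF (hpath_voccurs hh rfl)
    -- w1 has length at least M0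
    have hw1ge : M0 G ≤ w1.length := by
      by_contra hlt
      push_neg at hlt
      rcases List.append_eq_append_iff.mp hw with ⟨a', ha1, _⟩ | ⟨z, hz1, _⟩
      · have := congrArg List.length ha1
        simp only [List.length_append] at this
        omega
      · have hzne : z ≠ [] := by
          intro hznil
          subst hznil
          have := congrArg List.length hz1
          simp only [List.length_append, List.length_nil] at this
          omega
        rw [hz1] at hhy
        obtain ⟨Km, hkm1, hkm2⟩ := hpath_split hhy
        have hKm : FTerm.var n = Km := hpath_det hh hkm1
        rw [← hKm] at hkm2
        obtain ⟨hznil, _⟩ := hpath_var_inv hkm2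
        exact hzne hznil
    -- build the shorter path
    obtain ⟨sw, hsw, hswl⟩ := short_sink G hsink A hnlt
    have hend : GTerm.subst σ0 (FTerm.var n : FTerm G.sig).toTerm = c ⟨n, hnlt⟩ := by
      simp only [FTerm.toTerm]
      rw [subst_var]
      exact hσ0lt n hnlt
    have hrV : RPath G V sw (c ⟨n, hnlt⟩) := by
      have h5 := hpath_rpath hsw hσ0fin
      rw [← hVK0, hend] at h5
      exact h5
    have hrp' : RPath G (c ⟨n, hnlt⟩) w2 T' := by
      rw [← hend]
      exact hrp
    have hfull : RPath G T (u1 ++ (sw ++ w2)) T' :=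
      rpath_append h1 (rpath_append hrV hrp')
    have hle := hshortest _ hfull
    have hul : u.length = u1.length + u2.length + u3.length := by
      rw [hu]
      simp only [List.length_append]
    have h23 : u2.length + u3.length = w1.length + w2.length := by
      have := congrArg List.length hw
      simpa [List.length_append] using this
    simp only [List.length_append] at hle
    omega
  -- hence the head survives the whole path
  have hw2 : w2 = [] := by
    rcases hdisj with h | ⟨n, hn⟩
    · exact h
    · exact absurd hn (fun hn => hvar n hn)
  subst hw2
  rw [List.append_nil] at hw
  rw [← hw] at hh
  have hT' : T' = GTerm.subst σ0 K1.toTerm := rpath_nil_inv hrp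
  -- decompose the first step of u2
  obtain ⟨r0, u2', hu2⟩ : ∃ r0 u2', u2 = r0 :: u2' := by
    cases u2 with
    | nil =>
      exfalso
      have := @M0_pos G
      simp only [List.length_nil] at hlen2
      omega
    | cons x xs => exact ⟨x, xs, rfl⟩
  have hh2 : HPath G (lhsF A) (r0 :: (u2' ++ u3)) K1 := by
    rw [hu2] at hh
    simpa using hh
  obtain ⟨t0, hK0app, hr0, hpH1⟩ := hpath_cons_inv hh2
  have hdH1 : (ftsub r0.rhs (ext t0)).depth ≤ Hmax G := by
    have hd1 := depth_step hr0 t0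
    have hd2 : (FTerm.app r0.nt t0).depth ≤ 1 := by
      rw [← hK0app]
      exact lhsF_depth A
    omega
  -- window property along u2' ++ u3
  have hwin : ∀ (a b c2 : List (GRule G.sig)) (B : Fin G.sig.ntCount)
      (t2 : Fin (G.sig.arity B) → FTerm G.sig),
      u2' ++ u3 = a ++ b ++ c2 → b.length = M0 G →
      HPath G (ftsub r0.rhs (ext t0)) a (FTerm.app B t2) →
      ∀ J, ¬ HPath G (lhsF B) b J := by
    intro a b c2 B t2 hsp hbl hpa J hJ
    have hKa : HPath G (lhsF A) (r0 :: a) (FTerm.app B t2) := by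
      rw [hK0app]
      exact HPath.cons hr0 hpa
    have hrw : RPath G V (r0 :: a) (GTerm.subst σ0 (FTerm.app B t2).toTerm) := by
      have h6 := hpath_rpath hKa hσ0fin
      rw [← hVK0] at h6
      exact h6
    have hrTW : RPath G T (u1 ++ (r0 :: a)) (GTerm.subst σ0 (FTerm.app B t2).toTerm) :=
      rpath_append h1 hrw
    have huEq : u = (u1 ++ (r0 :: a)) ++ b ++ c2 := by
      rw [hu, hu2]
      simp only [List.cons_append, List.append_assoc]
      rw [hsp]
      simp [List.append_assoc]
    have hlen : u1.length < (u1 ++ (r0 :: a)).length := by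
      simp [List.length_append]
    have hnope := hlast (u1 ++ (r0 :: a)) b c2 _ huEq hbl hlen hrTW
    apply hnope
    refine ⟨B, (fun i => GTerm.subst σ0 (t2 i).toTerm), ?_, J.toTerm, ?_⟩
    · simp only [FTerm.toTerm, subst_app]
    · have h7 := hpath_rpath hJ (σ := GTerm.var G.sig) finsupp_var
      rw [subst_var_id, subst_var_id, lhsF_toTerm] at h7
      exact h7
  -- the core depth bound
  have hdK1 : K1.depth ≤ M0 G * Hmax G :=
    core G (u2' ++ u3).length (u2' ++ u3) le_rfl (ftsub r0.rhs (ext t0)) K1 hpH1 hdH1 hwin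
  -- conclusion
  refine ⟨K1, σ0, hσ0fin, ?_, hT', ?_⟩
  · calc K1.depth ≤ M0 G * Hmax G := hdK1
      _ ≤ (1 + M0 G) * Hmax G := Nat.mul_le_mul_right _ (by omega)
  · intro n hne
    by_cases h : n < G.sig.arity A
    · refine ⟨A, c, hV, ⟨n, h⟩, ?_⟩
      exact hσ0lt n h
    · exfalso
      apply hne
      simp only [hσ0def]
      rw [dif_neg h]
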